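/- Let X, Y be normed spaces, S : X → Y a bounded linear map, y₀ ∈ Y, L(x) = S(x) + y₀, and g : Y → ℝ a continuous convex function. Then for every a ∈ X, the subdifferential of g ∘ L at a equals S*(∂g(L(a))), i.e., ∂(g ∘ L)(a) = { x* ∘ S : x* ∈ ∂g(L(a)) } (precomposition with S). -/

import Mathlib

open Filter Set

theorem subdifferential_chain_rule
    {X Y : Type*} [NormedAddCommGroup X] [NormedSpace ℝ X]
    [NormedAddCommGroup Y] [NormedSpace ℝ Y]
    (S : X →L[ℝ] Y) (y₀ : Y) (L : X → Y) (hL : ∀ x, L x = S x + y₀)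
    (g : Y → ℝ) (hg_cont : Continuous g) (hg_conv : ConvexOn ℝ Set.univ g) (a : X) :
    {x' : X →L[ℝ] ℝ | ∀ x : X, x' (x - a) ≤ g (L x) - g (L a)} =
      {x' : X →L[ℝ] ℝ | ∃ y' : Y →L[ℝ] ℝ,
        (∀ y : Y, y' (y - L a) ≤ g y - g (L a)) ∧ x' = y'.comp S} := by
  ext x'
  simp only [Set.mem_setOf_eq]
  constructor
  · -- hard direction
    intro hx
    -- the open strict epigraph of g
    set A : Set (Y × ℝ) := {p : Y × ℝ | g p.1 < p.2} with hA
    have hAconv : Convex ℝ A := by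
      have := hg_conv.convex_strict_epigraph
      convert this using 1
      ext p; simp [hA]
    have hAopen : IsOpen A := isOpen_lt (hg_cont.comp continuous_fst) continuous_snd
    -- the affine set
    set B : Set (Y × ℝ) := Set.range (fun x : X => (L x, x' (x - a) + g (L a))) with hB
    have hBconv : Convex ℝ B := by
      rintro p ⟨x₁, rfl⟩ q ⟨x₂, rfl⟩ t s ht hs hts
      obtain rfl : s = 1 - t := by linarith
      refine ⟨t • x₁ + (1-t) • x₂, ?_⟩
      have h1 : L (t • x₁ + (1-t) • x₂) = t • L x₁ + (1-t) • L x₂ := by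
        simp only [hL, map_add, map_smul]
        module
      have h2 : x' (t • x₁ + (1-t) • x₂ - a) + g (L a)
          = t • (x' (x₁ - a) + g (L a)) + (1-t) • (x' (x₂ - a) + g (L a)) := by
        have h3 : t • x₁ + (1-t) • x₂ - a = t • (x₁ - a) + (1-t) • (x₂ - a) := by
          module
        rw [h3, map_add, map_smul, map_smul]
        simp only [smul_eq_mul]
        ring
      dsimp only
      rw [Prod.smul_mk, Prod.smul_mk, Prod.mk_add_mk, h1, h2]
    have hdisj : Disjoint A B := by
      rw [Set.disjoint_left]
      rintro p hp ⟨x, rfl⟩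
      have := hx x
      simp only [hA, Set.mem_setOf_eq] at hp
      linarith
    obtain ⟨f, u, hfu, huf⟩ := geometric_hahn_banach_open hAconv hAopen hBconv hdisj
    set c : ℝ := f (0, 1) with hc
    set F : Y → ℝ := fun y => f (y, 0) with hF
    have hsplit : ∀ (y : Y) (t : ℝ), f (y, t) = F y + t * c := by
      intro y t
      have : (y, t) = (y, (0:ℝ)) + t • ((0:Y), (1:ℝ)) := by
        simp [Prod.ext_iff]
      rw [this, map_add, map_smul]
      simp [hF, hc, smul_eq_mul]
    have hFadd : ∀ y z : Y, F (y + z) = F y + F z := by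
      intro y z
      simp only [hF]
      rw [show ((y+z, (0:ℝ)) : Y × ℝ) = (y,0) + (z,0) by simp [Prod.ext_iff], map_add]
    have hFsmul : ∀ (t : ℝ) (y : Y), F (t • y) = t * F y := by
      intro t y
      simp only [hF]
      rw [show ((t • y, (0:ℝ)) : Y × ℝ) = t • (y,0) by simp [Prod.ext_iff], map_smul, smul_eq_mul]
    -- membership facts
    have hAlt : ∀ (y : Y) (t : ℝ), g y < t → F y + t * c < u := by
      intro y t h
      have := hfu (y, t) (by simpa [hA] using h)
      rwa [hsplit] at this
    have hBge : ∀ x : X, u ≤ F (L x) + (x' (x - a) + g (L a)) * c := by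
      intro x
      have := huf _ ⟨x, rfl⟩
      rwa [hsplit] at this
    have hBa : u ≤ F (L a) + g (L a) * c := by
      have := hBge a
      simpa using this
    have hcneg : c < 0 := by
      have h1 := hAlt (L a) (g (L a) + 1) (by linarith)
      nlinarith
    -- subgradient inequality precursor: F y + g y * c ≤ u for all y
    have hkey : ∀ y : Y, F y + g y * c ≤ u := by
      intro y
      by_contra hcon
      push_neg at hcon
      set d := F y + g y * c - u with hd
      have hd0 : 0 < d := by linarith
      have hcpos : 0 < -c := by linarith
      have h1 := hAlt y (g y + d / (-c)) (by have := div_pos hd0 hcpos; linarith)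
      have h2 : (d / (-c)) * c = -d := by
        rw [div_neg, neg_mul, div_mul_cancel₀ d hcneg.ne]
      nlinarith
    -- f vanishes on directions of B
    have hdir : ∀ v : X, F (S v) + x' v * c = 0 := by
      intro v
      by_contra hK
      set K := F (S v) + x' v * c with hKdef
      have hgen : ∀ s : ℝ, u ≤ F (L a) + g (L a) * c + s * K := by
        intro s
        have := hBge (a + s • v)
        have hLs : L (a + s • v) = L a + s • S v := by
          simp only [hL, map_add, map_smul]
          abel
        rw [hLs, hFadd, hFsmul] at this
        have hx's : x' (a + s • v - a) = s * x' v := by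
          rw [show a + s • v - a = s • v by abel, map_smul, smul_eq_mul]
        rw [hx's] at this
        have hexp : F (L a) + g (L a) * c + s * K
            = F (L a) + s * F (S v) + (s * x' v + g (L a)) * c := by
          rw [hKdef]; ring
        rw [hexp]
        exact this
      have := hgen ((u - (F (L a) + g (L a) * c) - 1) / K)
      rw [div_mul_cancel₀ _ hK] at this
      linarith
    -- construct y'
    refine ⟨(-c)⁻¹ • (f.comp (ContinuousLinearMap.inl ℝ Y ℝ)), ?_, ?_⟩
    · intro y
      have h1 : F (y - L a) = F y - F (L a) := by
        have := hFadd (y - L a) (L a)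
        simp only [sub_add_cancel] at this
        linarith
      have h2 : F y + g y * c ≤ F (L a) + g (L a) * c := le_trans (hkey y) hBa
      have h3 : ((-c)⁻¹ • (f.comp (ContinuousLinearMap.inl ℝ Y ℝ))) (y - L a)
          = (-c)⁻¹ * F (y - L a) := by
        simp [hF, ContinuousLinearMap.inl_apply, smul_eq_mul]
      rw [h3, h1]
      rw [inv_mul_le_iff₀ (by linarith : (0:ℝ) < -c)]
      nlinarith
    · ext v
      have h0 := hdir v
      have h3 : ((-c)⁻¹ • (f.comp (ContinuousLinearMap.inl ℝ Y ℝ))) (S v)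
          = (-c)⁻¹ * F (S v) := by
        simp [hF, ContinuousLinearMap.inl_apply, smul_eq_mul]
      simp only [ContinuousLinearMap.comp_apply]
      rw [h3]
      have hcne : -c ≠ 0 := by linarith
      rw [inv_mul_eq_div, eq_div_iff hcne]
      linarith
  · rintro ⟨y', hy', rfl⟩
    intro x
    have h1 : S (x - a) = L x - L a := by
      rw [map_sub, hL, hL]; abel
    rw [ContinuousLinearMap.comp_apply, h1]
    exact hy' (L x)
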